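/- arXiv:1202.2094 — 2 statements merged into one kernel-verified Lean document; each statement's English description precedes it below -/
import Mathlib

section
/- For every positive integer n, the number of additive subgroups of ℤ × ℤ of index n equals σ₁(n), the sum of the positive divisors of n. -/
/-- The sublattice of `ℤ × ℤ` spanned by `(a, b)` and `(0, d)`. -/
private def latt (a d : ℕ) (b : ℤ) : Submodule ℤ (ℤ × ℤ) :=
  Submodule.span ℤ {((a : ℤ), b), ((0 : ℤ), (d : ℤ))}

private lemma mem_latt (a d : ℕ) (b : ℤ) (x y : ℤ) :
    (x, y) ∈ latt a d b ↔ ∃ s t : ℤ, s * a = x ∧ s * b + t * d = y := by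
  rw [latt, Submodule.mem_span_pair]
  constructor
  · rintro ⟨s, t, h⟩
    rw [Prod.ext_iff] at h
    simp only [Prod.fst_add, Prod.snd_add, Prod.smul_mk, smul_eq_mul] at h
    exact ⟨s, t, by constructor <;> linarith [h.1, h.2]⟩
  · rintro ⟨s, t, h1, h2⟩
    refine ⟨s, t, ?_⟩
    rw [Prod.ext_iff]
    simp only [Prod.fst_add, Prod.snd_add, Prod.smul_mk, smul_eq_mul]
    constructor <;> linarith

private noncomputable def lattEquiv (a d : ℕ) (b : ℤ) (ha : 0 < a) (hd : 0 < d) :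
    ((ℤ × ℤ) ⧸ (latt a d b).toAddSubgroup) ≃ ZMod a × ZMod d := by
  haveI : NeZero a := ⟨ha.ne'⟩
  haveI : NeZero d := ⟨hd.ne'⟩
  have ha' : (a : ℤ) ≠ 0 := by exact_mod_cast ha.ne'
  have hd' : (d : ℤ) ≠ 0 := by exact_mod_cast hd.ne'
  refine
  { toFun := fun q => Quotient.liftOn' q
      (fun p => ((p.1 : ZMod a), ((p.2 - p.1 / (a : ℤ) * b : ℤ) : ZMod d))) ?_
    invFun := fun uv => QuotientAddGroup.mk (((uv.1.val : ℤ)), ((uv.2.val : ℤ)))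
    left_inv := ?_
    right_inv := ?_ }
  · rintro ⟨x, y⟩ ⟨x', y'⟩ hr
    rw [QuotientAddGroup.leftRel_apply] at hr
    rw [Submodule.mem_toAddSubgroup] at hr
    have : (-(x, y) + (x', y')) = ((x' - x, y' - y) : ℤ × ℤ) := by
      rw [Prod.ext_iff]; constructor <;> simp <;> ring
    rw [this, mem_latt] at hr
    obtain ⟨s, t, hs, ht⟩ := hr
    have hx' : x' = x + s * a := by linarith
    have hdivx : x' / (a : ℤ) = x / (a : ℤ) + s := by
      rw [hx', Int.add_mul_ediv_right _ _ ha']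
    refine Prod.ext ?_ ?_
    · show ((x : ZMod a) = (x' : ZMod a))
      rw [← sub_eq_zero, ← Int.cast_sub, ZMod.intCast_zmod_eq_zero_iff_dvd]
      exact ⟨-s, by rw [hx']; ring⟩
    · show (((y - x / (a : ℤ) * b : ℤ) : ZMod d) = ((y' - x' / (a : ℤ) * b : ℤ) : ZMod d))
      rw [← sub_eq_zero, ← Int.cast_sub, ZMod.intCast_zmod_eq_zero_iff_dvd]
      refine ⟨-t, ?_⟩
      rw [hdivx]
      have : y' - y = s * b + t * d := by linarith
      nlinarith [this]
  · have key : ∀ u v x y : ℤ, (-(u, v) + (x, y) : ℤ × ℤ) = (x - u, y - v) := by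
      intros u v x y
      rw [Prod.ext_iff]
      constructor <;> simp <;> ring
    intro q
    induction q using Quotient.inductionOn' with
    | h p =>
      obtain ⟨x, y⟩ := p
      have h1 : ((((x : ZMod a)).val : ℤ)) = x % a := ZMod.val_intCast x
      have h2 : ((((y - x / (a : ℤ) * b : ℤ) : ZMod d)).val : ℤ) = (y - x / (a : ℤ) * b) % d :=
        ZMod.val_intCast _
      show QuotientAddGroup.mk ((((x : ZMod a)).val : ℤ),
          ((((y - x / (a : ℤ) * b : ℤ) : ZMod d)).val : ℤ)) = QuotientAddGroup.mk (x, y)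
      rw [QuotientAddGroup.eq, Submodule.mem_toAddSubgroup, key, h1, h2, mem_latt]
      refine ⟨x / (a : ℤ), (y - x / (a : ℤ) * b) / d, ?_, ?_⟩
      · have := Int.mul_ediv_add_emod x (a : ℤ)
        linarith
      · have := Int.mul_ediv_add_emod (y - x / (a : ℤ) * b) (d : ℤ)
        linarith
  · rintro ⟨u, v⟩
    show Quotient.liftOn' (QuotientAddGroup.mk _) _ _ = _
    rw [QuotientAddGroup.mk]
    rw [Quotient.liftOn'_mk'']
    have hu : (0 : ℤ) ≤ (u.val : ℤ) := by positivity
    have hu2 : ((u.val : ℤ)) < (a : ℤ) := by exact_mod_cast u.val_lt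
    have hdiv : ((u.val : ℤ)) / (a : ℤ) = 0 := Int.ediv_eq_zero_of_lt hu hu2
    refine Prod.ext ?_ ?_
    · show (((u.val : ℤ) : ZMod a) = u)
      push_cast
      exact ZMod.natCast_rightInverse u
    · show ((((v.val : ℤ) - (u.val : ℤ) / (a : ℤ) * b : ℤ) : ZMod d) = v)
      rw [hdiv]
      push_cast
      simp [ZMod.natCast_rightInverse v]

private lemma latt_index (a d : ℕ) (ha : 0 < a) (hd : 0 < d) (b : ℤ) :
    (latt a d b).toAddSubgroup.index = a * d := by
  rw [AddSubgroup.index, Nat.card_congr (lattEquiv a d b ha hd), Nat.card_prod,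
    Nat.card_zmod, Nat.card_zmod]


private lemma exists_latt (n : ℕ) (hn : 0 < n) (H : AddSubgroup (ℤ × ℤ)) (hH : H.index = n) :
    ∃ a d b : ℕ, 0 < a ∧ 0 < d ∧ b < d ∧ H = (latt a d (b : ℤ)).toAddSubgroup := by
  obtain ⟨α, hA⟩ := Int.subgroup_cyclic (H.map (AddMonoidHom.fst ℤ ℤ))
  obtain ⟨δ, hK⟩ := Int.subgroup_cyclic (H.comap (AddMonoidHom.inr ℤ ℤ))
  have hfin : H.index ≠ 0 := by rw [hH]; omega
  -- every first coordinate of a member is a multiple of α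
  have hmemA : ∀ x y : ℤ, (x, y) ∈ H → α ∣ x := by
    intro x y hxy
    have : x ∈ H.map (AddMonoidHom.fst ℤ ℤ) := ⟨(x, y), hxy, rfl⟩
    rw [hA, AddSubgroup.mem_closure_singleton] at this
    obtain ⟨k, hk⟩ := this
    exact ⟨k, by rw [← hk]; simp [mul_comm]⟩
  have hmemK : ∀ y : ℤ, ((0 : ℤ), y) ∈ H → δ ∣ y := by
    intro y hy
    have : y ∈ H.comap (AddMonoidHom.inr ℤ ℤ) := hy
    rw [hK, AddSubgroup.mem_closure_singleton] at this
    obtain ⟨k, hk⟩ := this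
    exact ⟨k, by rw [← hk]; simp [mul_comm]⟩
  have hα : α ≠ 0 := by
    rintro rfl
    have hinj : Function.Injective (fun k : ℤ => (QuotientAddGroup.mk (k, 0) : (ℤ × ℤ) ⧸ H)) := by
      intro j k hjk
      rw [QuotientAddGroup.eq] at hjk
      have : (-(j, (0:ℤ)) + (k, 0) : ℤ × ℤ) = (k - j, 0) := by
        rw [Prod.ext_iff]; constructor <;> simp <;> ring
      rw [this] at hjk
      have := hmemA _ _ hjk
      simp at this
      linarith
    haveI : Infinite ((ℤ × ℤ) ⧸ H) := Infinite.of_injective _ hinj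
    exact hfin (Nat.card_eq_zero_of_infinite)
  have hδ : δ ≠ 0 := by
    rintro rfl
    have hinj : Function.Injective (fun k : ℤ => (QuotientAddGroup.mk (0, k) : (ℤ × ℤ) ⧸ H)) := by
      intro j k hjk
      rw [QuotientAddGroup.eq] at hjk
      have : (-((0:ℤ), j) + (0, k) : ℤ × ℤ) = (0, k - j) := by
        rw [Prod.ext_iff]; constructor <;> simp <;> ring
      rw [this] at hjk
      have := hmemK _ hjk
      simp at this
      linarith
    haveI : Infinite ((ℤ × ℤ) ⧸ H) := Infinite.of_injective _ hinj
    exact hfin (Nat.card_eq_zero_of_infinite)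
  set a : ℕ := α.natAbs with ha_def
  set d : ℕ := δ.natAbs with hd_def
  have ha : 0 < a := Int.natAbs_pos.mpr hα
  have hd : 0 < d := Int.natAbs_pos.mpr hδ
  have hd' : (0 : ℤ) < (d : ℤ) := by exact_mod_cast hd
  have ha' : ((a : ℤ)) ≠ 0 := by exact_mod_cast ha.ne'
  -- (0, d) ∈ H
  have hδK : δ ∈ H.comap (AddMonoidHom.inr ℤ ℤ) := by
    rw [hK]; exact AddSubgroup.mem_closure_singleton_self δ
  have h0d : ((0 : ℤ), (d : ℤ)) ∈ H := by
    rcases Int.natAbs_eq δ with h | h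
    · have hd_eq : ((d : ℤ)) = δ := by rw [hd_def]; exact h.symm
      rw [hd_eq]; exact hδK
    · have hd_eq : ((d : ℤ)) = -δ := by rw [hd_def]; omega
      have hneg : ((0 : ℤ), -δ) ∈ H := by
        simpa using H.neg_mem (show ((0 : ℤ), δ) ∈ H from hδK)
      rw [hd_eq]; exact hneg
  -- some (a, y₀) ∈ H
  have haA : ((a : ℤ)) ∈ H.map (AddMonoidHom.fst ℤ ℤ) := by
    rw [hA]
    rcases Int.natAbs_eq α with h | h
    · have ha_eq : ((a : ℤ)) = α := by rw [ha_def]; exact h.symm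
      rw [ha_eq]; exact AddSubgroup.mem_closure_singleton_self α
    · have ha_eq : ((a : ℤ)) = -α := by rw [ha_def]; omega
      rw [ha_eq]
      exact AddSubgroup.neg_mem _ (AddSubgroup.mem_closure_singleton_self α)
  obtain ⟨p, hpH, hp1⟩ := haA
  -- divisibility facts
  have hdvd_a : ∀ x y : ℤ, (x, y) ∈ H → ((a : ℤ)) ∣ x := by
    intro x y hxy
    exact (Int.natAbs_dvd).mpr (hmemA x y hxy)
  have hdvd_d : ∀ y : ℤ, ((0 : ℤ), y) ∈ H → ((d : ℤ)) ∣ y := by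
    intro y hy
    exact (Int.natAbs_dvd).mpr (hmemK y hy)
  -- b
  set b0 : ℤ := p.2 % (d : ℤ) with hb0_def
  have hb0_nonneg : 0 ≤ b0 := Int.emod_nonneg _ hd'.ne'
  have hb0_lt : b0 < (d : ℤ) := Int.emod_lt_of_pos _ hd'
  set b : ℕ := b0.toNat with hb_def
  have hb_cast : ((b : ℤ)) = b0 := Int.toNat_of_nonneg hb0_nonneg
  have hb_lt : b < d := by omega
  -- (a, b) ∈ H
  have hab : ((a : ℤ), (b : ℤ)) ∈ H := by
    have hsub := H.sub_mem hpH (AddSubgroup.zsmul_mem H h0d (p.2 / (d : ℤ)))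
    have heq : (p - (p.2 / (d : ℤ)) • ((0 : ℤ), (d : ℤ)) : ℤ × ℤ) = ((a : ℤ), (b : ℤ)) := by
      rw [Prod.ext_iff]
      constructor
      · simp only [Prod.smul_mk, smul_eq_mul, Prod.fst_sub, mul_zero, sub_zero]
        exact hp1
      · simp only [Prod.smul_mk, smul_eq_mul, Prod.snd_sub]
        rw [hb_cast, hb0_def]
        rw [Int.emod_def]
        ring
    rw [heq] at hsub
    exact hsub
  refine ⟨a, d, b, ha, hd, hb_lt, ?_⟩
  ext q
  obtain ⟨x, y⟩ := q
  rw [Submodule.mem_toAddSubgroup, mem_latt]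
  constructor
  · intro hxy
    obtain ⟨s, hs⟩ := hdvd_a x y hxy
    have hsub := H.sub_mem hxy (AddSubgroup.zsmul_mem H hab s)
    have heq : ((x, y) - s • ((a : ℤ), (b : ℤ)) : ℤ × ℤ) = ((0 : ℤ), y - s * b) := by
      rw [Prod.ext_iff]
      constructor
      · simp only [Prod.smul_mk, smul_eq_mul, Prod.fst_sub]
        rw [hs]; ring
      · simp [Prod.smul_mk, smul_eq_mul]
    rw [heq] at hsub
    obtain ⟨t, ht⟩ := hdvd_d _ hsub
    exact ⟨s, t, by linarith [hs], by linarith [ht]⟩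
  · rintro ⟨s, t, hs, ht⟩
    have : ((x, y) : ℤ × ℤ) = s • ((a : ℤ), (b : ℤ)) + t • ((0 : ℤ), (d : ℤ)) := by
      rw [Prod.ext_iff]
      constructor
      · simp only [Prod.smul_mk, smul_eq_mul, Prod.fst_add]
        linarith
      · simp only [Prod.smul_mk, smul_eq_mul, Prod.snd_add]
        linarith
    rw [this]
    exact H.add_mem (AddSubgroup.zsmul_mem H hab s) (AddSubgroup.zsmul_mem H h0d t)


private lemma latt_inj {a d a' d' b b' : ℕ} (ha : 0 < a) (hd : 0 < d) (ha' : 0 < a')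
    (hd' : 0 < d') (hb : b < d) (hb' : b' < d')
    (h : latt a d (b : ℤ) = latt a' d' (b' : ℤ)) : a = a' ∧ d = d' ∧ b = b' := by
  have gen1 : ∀ (a d : ℕ) (b : ℤ), ((a : ℤ), b) ∈ latt a d b := fun a d b =>
    (mem_latt a d b _ _).mpr ⟨1, 0, by ring, by ring⟩
  have gen2 : ∀ (a d : ℕ) (b : ℤ), ((0 : ℤ), (d : ℤ)) ∈ latt a d b := fun a d b =>
    (mem_latt a d b _ _).mpr ⟨0, 1, by ring, by ring⟩
  have haz : ((a : ℤ)) ≠ 0 := by exact_mod_cast ha.ne'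
  have haz' : ((a' : ℤ)) ≠ 0 := by exact_mod_cast ha'.ne'
  -- d = d'
  have hdd1 : ((d : ℤ)) ∣ (d' : ℤ) := by
    have m1 : ((0 : ℤ), (d' : ℤ)) ∈ latt a d (b : ℤ) := by rw [h]; exact gen2 a' d' _
    obtain ⟨s, t, hs, ht⟩ := (mem_latt a d (b : ℤ) _ _).mp m1
    have hs0 : s = 0 := by
      rcases mul_eq_zero.mp hs with h' | h'
      · exact h'
      · exact absurd h' haz
    subst hs0
    exact ⟨t, by linarith [ht]⟩
  have hdd2 : ((d' : ℤ)) ∣ (d : ℤ) := by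
    have m1 : ((0 : ℤ), (d : ℤ)) ∈ latt a' d' (b' : ℤ) := by rw [← h]; exact gen2 a d _
    obtain ⟨s, t, hs, ht⟩ := (mem_latt a' d' (b' : ℤ) _ _).mp m1
    have hs0 : s = 0 := by
      rcases mul_eq_zero.mp hs with h' | h'
      · exact h'
      · exact absurd h' haz'
    subst hs0
    exact ⟨t, by linarith [ht]⟩
  have hdeq : d = d' := Nat.dvd_antisymm (Int.natCast_dvd_natCast.mp hdd1)
    (Int.natCast_dvd_natCast.mp hdd2)
  -- a = a'
  have haa1 : ((a : ℤ)) ∣ (a' : ℤ) := by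
    have m1 : ((a' : ℤ), (b' : ℤ)) ∈ latt a d (b : ℤ) := by rw [h]; exact gen1 a' d' _
    obtain ⟨s, t, hs, ht⟩ := (mem_latt a d (b : ℤ) _ _).mp m1
    exact ⟨s, by linarith [hs]⟩
  have haa2 : ((a' : ℤ)) ∣ (a : ℤ) := by
    have m1 : ((a : ℤ), (b : ℤ)) ∈ latt a' d' (b' : ℤ) := by rw [← h]; exact gen1 a d _
    obtain ⟨s, t, hs, ht⟩ := (mem_latt a' d' (b' : ℤ) _ _).mp m1
    exact ⟨s, by linarith [hs]⟩
  have haeq : a = a' := Nat.dvd_antisymm (Int.natCast_dvd_natCast.mp haa1)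
    (Int.natCast_dvd_natCast.mp haa2)
  refine ⟨haeq, hdeq, ?_⟩
  subst haeq
  subst hdeq
  -- b = b'
  have m1 : ((a : ℤ), (b' : ℤ)) ∈ latt a d (b : ℤ) := by rw [h]; exact gen1 a d _
  obtain ⟨s, t, hs, ht⟩ := (mem_latt a d (b : ℤ) _ _).mp m1
  have hs1 : s = 1 := by
    have : s * (a : ℤ) = 1 * (a : ℤ) := by rw [hs, one_mul]
    exact mul_right_cancel₀ haz this
  subst hs1
  have hdz : (0 : ℤ) < (d : ℤ) := by exact_mod_cast hd
  have hbz : (0 : ℤ) ≤ (b : ℤ) := by positivity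
  have hbz' : (0 : ℤ) ≤ (b' : ℤ) := by positivity
  have hblt : ((b : ℤ)) < (d : ℤ) := by exact_mod_cast hb
  have hblt' : ((b' : ℤ)) < (d : ℤ) := by exact_mod_cast hb'
  have ht1 : t * (d : ℤ) < 1 * (d : ℤ) := by linarith
  have ht2 : (-1 : ℤ) * (d : ℤ) < t * (d : ℤ) := by linarith
  have ht3 : t < 1 := lt_of_mul_lt_mul_right ht1 (le_of_lt hdz)
  have ht4 : (-1 : ℤ) < t := lt_of_mul_lt_mul_right ht2 (le_of_lt hdz)
  have ht0 : t = 0 := by omega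
  subst ht0
  have : ((b : ℤ)) = (b' : ℤ) := by linarith
  exact_mod_cast this

/-- For every positive integer `n`, the number of additive subgroups of
`ℤ × ℤ` of index `n` equals `σ₁(n)`, the sum of the positive divisors of `n`. -/
theorem stmt8 (n : ℕ) (hn : 0 < n) :
    Nat.card {H : AddSubgroup (ℤ × ℤ) // H.index = n} = ∑ d ∈ n.divisors, d := by
  classical
  have pos : ∀ t : {t : ℕ × ℕ × ℕ // t.1 * t.2.1 = n ∧ t.2.2 < t.2.1},
      0 < t.1.1 ∧ 0 < t.1.2.1 := by
    rintro ⟨⟨a, d, b⟩, h1, h2⟩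
    refine ⟨Nat.pos_of_ne_zero ?_, Nat.pos_of_ne_zero ?_⟩ <;> rintro rfl <;> simp at h1 <;> omega
  let Φ : {t : ℕ × ℕ × ℕ // t.1 * t.2.1 = n ∧ t.2.2 < t.2.1} →
      {H : AddSubgroup (ℤ × ℤ) // H.index = n} := fun t =>
    ⟨(latt t.1.1 t.1.2.1 ((t.1.2.2 : ℕ) : ℤ)).toAddSubgroup, by
      rw [latt_index _ _ (pos t).1 (pos t).2]
      exact t.2.1⟩
  have hbij : Function.Bijective Φ := by
    constructor
    · rintro t t' htt
      have hsg := Subtype.ext_iff.mp htt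
      have hsub : latt t.1.1 t.1.2.1 ((t.1.2.2 : ℕ) : ℤ)
          = latt t'.1.1 t'.1.2.1 ((t'.1.2.2 : ℕ) : ℤ) :=
        Submodule.toAddSubgroup_injective hsg
      obtain ⟨h1, h2, h3⟩ := latt_inj (pos t).1 (pos t).2 (pos t').1 (pos t').2
        t.2.2 t'.2.2 hsub
      apply Subtype.ext
      exact Prod.ext h1 (Prod.ext h2 h3)
    · rintro ⟨H, hH⟩
      obtain ⟨a, d, b, ha, hd, hb, rfl⟩ := exists_latt n hn H hH
      refine ⟨⟨(a, d, b), ?_, hb⟩, rfl⟩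
      rw [← latt_index a d ha hd ((b : ℕ) : ℤ)]
      exact hH
  rw [← Nat.card_eq_of_bijective Φ hbij]
  have e : {t : ℕ × ℕ × ℕ // t.1 * t.2.1 = n ∧ t.2.2 < t.2.1}
      ≃ Σ x : n.divisorsAntidiagonal, Fin x.1.2 :=
  { toFun := fun t => ⟨⟨(t.1.1, t.1.2.1), Nat.mem_divisorsAntidiagonal.mpr ⟨t.2.1, hn.ne'⟩⟩,
      ⟨t.1.2.2, t.2.2⟩⟩
    invFun := fun x => ⟨(x.1.1.1, x.1.1.2, x.2.1), (Nat.mem_divisorsAntidiagonal.mp x.1.2).1,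
      x.2.2⟩
    left_inv := by rintro ⟨⟨a, d, b⟩, h1, h2⟩; rfl
    right_inv := by rintro ⟨⟨⟨a, d⟩, h⟩, ⟨b, hb⟩⟩; rfl }
  rw [Nat.card_congr e, Nat.card_eq_fintype_card, Fintype.card_sigma]
  simp only [Fintype.card_fin]
  rw [Finset.sum_coe_sort (n.divisorsAntidiagonal) (fun i => i.2)]
  exact Nat.sum_divisorsAntidiagonal' (f := fun _ b => b)
end

section
/- For every integer k ≥ 1: the Taylor coefficients of A_k at 0 vanish in all degrees strictly less than k(k+1)/2 and the coefficient in degree k(k+1)/2 equals 1; likewise, the Taylor coefficients of C_k at 0 vanish in all degrees strictly less than k² and the coefficient in degree k² equals 1. -/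
open Finset Metric

lemma mac_sum_d_min (d : ℕ → ℕ) (hd : StrictMono d) :
    ∀ (k : ℕ) (s : Finset ℕ), s.card = k → 0 ∉ s →
      (∑ i ∈ Finset.Icc 1 k, d i) ≤ ∑ m ∈ s, d m ∧
      (s ≠ Finset.Icc 1 k → (∑ i ∈ Finset.Icc 1 k, d i) < ∑ m ∈ s, d m) := by
  intro k
  induction k with
  | zero =>
    intro s hs h0
    rw [Finset.card_eq_zero] at hs
    subst hs
    simp
  | succ k ih =>
    intro s hs h0
    have hne : s.Nonempty := Finset.card_pos.mp (by omega)
    set M := s.max' hne with hM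
    have hMmem : M ∈ s := s.max'_mem hne
    have hsub : s ⊆ Finset.Icc 1 M := by
      intro x hx
      simp only [Finset.mem_Icc]
      exact ⟨Nat.one_le_iff_ne_zero.mpr (by rintro rfl; exact h0 hx), s.le_max' x hx⟩
    have hMk : k + 1 ≤ M := by
      have h1 := Finset.card_le_card hsub
      rw [hs, Nat.card_Icc] at h1
      omega
    have hcard' : (s.erase M).card = k := by
      rw [Finset.card_erase_of_mem hMmem, hs]; omega
    have h0' : 0 ∉ s.erase M := fun h => h0 (Finset.mem_of_mem_erase h)
    obtain ⟨hle, hlt⟩ := ih (s.erase M) hcard' h0'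
    have hsum : ∑ m ∈ s, d m = d M + ∑ m ∈ s.erase M, d m := by
      rw [← Finset.sum_insert (Finset.notMem_erase M s), Finset.insert_erase hMmem]
    have hicc : Finset.Icc 1 (k + 1) = insert (k + 1) (Finset.Icc 1 k) := by
      ext x; simp only [Finset.mem_Icc, Finset.mem_insert]; omega
    have htop : ∑ i ∈ Finset.Icc 1 (k + 1), d i
        = d (k + 1) + ∑ i ∈ Finset.Icc 1 k, d i := by
      rw [hicc, Finset.sum_insert (by simp)]
    have hdM : d (k + 1) ≤ d M := hd.monotone hMk
    constructor
    · omega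
    · intro hneq
      by_cases hMeq : M = k + 1
      · have hers : s.erase M ≠ Finset.Icc 1 k := by
          intro h
          apply hneq
          rw [← Finset.insert_erase hMmem, h, hMeq, ← hicc]
        have := hlt hers
        omega
      · have : d (k + 1) < d M := hd (by omega)
        omega

lemma mac_summable_base (k : ℕ) :
    Summable (fun s : {s : Finset ℕ // s.card = k ∧ 0 ∉ s} =>
      ∏ m ∈ (s : Finset ℕ), (2⁻¹ : ℝ) ^ m) := by
  apply summable_of_sum_le (c := Real.exp 2)
  · intro s
    exact Finset.prod_nonneg fun m _ => by positivity
  · intro u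
    set T : Finset ℕ := u.sup (fun s => (s : Finset ℕ)) with hT
    calc ∑ s ∈ u, ∏ m ∈ (s : Finset ℕ), (2⁻¹ : ℝ) ^ m
        = ∑ t ∈ u.image (fun s : {s : Finset ℕ // s.card = k ∧ 0 ∉ s} => (s : Finset ℕ)),
            ∏ m ∈ t, (2⁻¹ : ℝ) ^ m := by
          rw [Finset.sum_image]
          intro x _ y _ h
          exact Subtype.ext h
      _ ≤ ∑ t ∈ T.powerset, ∏ m ∈ t, (2⁻¹ : ℝ) ^ m := by
          apply Finset.sum_le_sum_of_subset_of_nonneg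
          · intro t ht
            simp only [Finset.mem_image] at ht
            obtain ⟨s, hsu, rfl⟩ := ht
            exact Finset.mem_powerset.mpr (Finset.le_sup hsu)
          · intro t _ _
            exact Finset.prod_nonneg fun m _ => by positivity
      _ = ∏ m ∈ T, ((2⁻¹ : ℝ) ^ m + 1) := by
          rw [Finset.prod_add]
          simp
      _ ≤ ∏ m ∈ T, Real.exp ((2⁻¹ : ℝ) ^ m) := by
          apply Finset.prod_le_prod
          · intro m _; positivity
          · intro m _
            calc (2⁻¹ : ℝ) ^ m + 1 = 1 + (2⁻¹ : ℝ) ^ m := by ring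
              _ ≤ Real.exp ((2⁻¹ : ℝ) ^ m) := by
                  have := Real.add_one_le_exp ((2⁻¹ : ℝ) ^ m)
                  linarith
      _ = Real.exp (∑ m ∈ T, (2⁻¹ : ℝ) ^ m) := (Real.exp_sum T _).symm
      _ ≤ Real.exp 2 := by
          apply Real.exp_le_exp.mpr
          calc ∑ m ∈ T, (2⁻¹ : ℝ) ^ m
              ≤ ∑' m : ℕ, (2⁻¹ : ℝ) ^ m :=
                Summable.sum_le_tsum T (fun m _ => by positivity)
                  (summable_geometric_of_lt_one (by norm_num) (by norm_num))
            _ = 2 := by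
                rw [tsum_geometric_of_lt_one (by norm_num) (by norm_num)]
                norm_num

/-- The auxiliary function `G`. -/
noncomputable def macG (d : ℕ → ℕ) (k N : ℕ) (q : ℂ) : ℂ :=
  ∑' s : {s : Finset ℕ // s.card = k ∧ 0 ∉ s},
    q ^ ((∑ m ∈ (s : Finset ℕ), d m) - N) * ∏ m ∈ (s : Finset ℕ), ((1 - q ^ d m) ^ 2)⁻¹

lemma mac_denom_bound {q : ℂ} (hq : ‖q‖ < 2⁻¹) {n : ℕ} (hn : 1 ≤ n) :
    (1 - q ^ n) ≠ 0 ∧ ‖((1 - q ^ n) ^ 2)⁻¹‖ ≤ 4 := by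
  have hq0 : ‖q‖ ≤ 1 := by linarith
  have h1 : ‖q ^ n‖ ≤ ‖q‖ := by
    rw [norm_pow]
    exact pow_le_of_le_one (norm_nonneg q) hq0 (by omega)
  have h2 : (2⁻¹ : ℝ) ≤ ‖1 - q ^ n‖ := by
    have := norm_sub_norm_le (1 : ℂ) (q ^ n)
    rw [norm_one] at this
    linarith
  have hne : (1 - q ^ n) ≠ 0 := by
    intro h
    rw [h, norm_zero] at h2
    norm_num at h2
  refine ⟨hne, ?_⟩
  rw [norm_inv, norm_pow]
  have h3 : ((2⁻¹ : ℝ)) ^ 2 ≤ ‖1 - q ^ n‖ ^ 2 := by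
    apply pow_le_pow_left₀ (by norm_num) h2
  have h4 : (0:ℝ) < (2⁻¹ : ℝ) ^ 2 := by norm_num
  calc (‖1 - q ^ n‖ ^ 2)⁻¹ ≤ (((2⁻¹ : ℝ)) ^ 2)⁻¹ := by
        apply inv_anti₀ h4 h3
    _ = 4 := by norm_num

lemma mac_summable_u (d : ℕ → ℕ) (hdm : ∀ m, m ≤ d m) (k N : ℕ)
    (hNle : ∀ s : {s : Finset ℕ // s.card = k ∧ 0 ∉ s},
      N ≤ ∑ m ∈ (s : Finset ℕ), d m) :
    Summable (fun s : {s : Finset ℕ // s.card = k ∧ 0 ∉ s} =>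
      (4 : ℝ) ^ k * (2⁻¹ : ℝ) ^ ((∑ m ∈ (s : Finset ℕ), d m) - N)) := by
  apply Summable.of_nonneg_of_le (f := fun s : {s : Finset ℕ // s.card = k ∧ 0 ∉ s} => ((4:ℝ)^k * 2^N) * ∏ m ∈ (s : Finset ℕ), (2⁻¹ : ℝ) ^ m)
  · intro s; positivity
  · intro s
    set e := ∑ m ∈ (s : Finset ℕ), d m with he
    have h1 : (2⁻¹ : ℝ) ^ (e - N) = (2⁻¹ : ℝ) ^ e * 2 ^ N := by
      have hsub : e - N + N = e := Nat.sub_add_cancel (hNle s)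
      calc (2⁻¹ : ℝ) ^ (e - N) = (2⁻¹ : ℝ) ^ (e - N) * ((2⁻¹ : ℝ) ^ N * 2 ^ N) := by
            rw [← mul_pow]; norm_num
        _ = (2⁻¹ : ℝ) ^ (e - N + N) * 2 ^ N := by rw [pow_add]; ring
        _ = (2⁻¹ : ℝ) ^ e * 2 ^ N := by rw [hsub]
    have h2 : (2⁻¹ : ℝ) ^ e ≤ ∏ m ∈ (s : Finset ℕ), (2⁻¹ : ℝ) ^ m := by
      rw [he, ← Finset.prod_pow_eq_pow_sum]
      apply Finset.prod_le_prod
      · intro m _; positivity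
      · intro m _
        exact pow_le_pow_of_le_one (by norm_num) (by norm_num) (hdm m)
    calc (4 : ℝ) ^ k * (2⁻¹ : ℝ) ^ (e - N) = ((4:ℝ)^k * 2^N) * (2⁻¹ : ℝ) ^ e := by
          rw [h1]; ring
      _ ≤ ((4:ℝ)^k * 2^N) * ∏ m ∈ (s : Finset ℕ), (2⁻¹ : ℝ) ^ m := by
          apply mul_le_mul_of_nonneg_left h2 (by positivity)
  · exact (mac_summable_base k).mul_left _

lemma macG_differentiableOn (d : ℕ → ℕ) (hdm : ∀ m, m ≤ d m) (k N : ℕ)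
    (hNle : ∀ s : {s : Finset ℕ // s.card = k ∧ 0 ∉ s},
      N ≤ ∑ m ∈ (s : Finset ℕ), d m) :
    DifferentiableOn ℂ (macG d k N) (ball (0 : ℂ) 2⁻¹) := by
  have hd1 : ∀ m : ℕ, 1 ≤ m → 1 ≤ d m := fun m hm => le_trans hm (hdm m)
  have hmem : ∀ s : {s : Finset ℕ // s.card = k ∧ 0 ∉ s}, ∀ m ∈ (s : Finset ℕ), 1 ≤ m := by
    intro s m hm
    exact Nat.one_le_iff_ne_zero.mpr (fun h => s.2.2 (h ▸ hm))
  apply TendstoLocallyUniformlyOn.differentiableOn (φ := Filter.atTop)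
    (F := fun (t : Finset {s : Finset ℕ // s.card = k ∧ 0 ∉ s}) (q : ℂ) =>
      ∑ s ∈ t, q ^ ((∑ m ∈ (s : Finset ℕ), d m) - N) * ∏ m ∈ (s : Finset ℕ), ((1 - q ^ d m) ^ 2)⁻¹)
  · apply TendstoUniformlyOn.tendstoLocallyUniformlyOn
    apply tendstoUniformlyOn_tsum (mac_summable_u d hdm k N hNle)
    intro s q hq
    rw [mem_ball, dist_zero_right] at hq
    rw [norm_mul, norm_pow]
    have hb : ∀ m ∈ (s : Finset ℕ), ‖((1 - q ^ d m) ^ 2)⁻¹‖ ≤ 4 := fun m hm =>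
      (mac_denom_bound hq (hd1 m (hmem s m hm))).2
    calc ‖q‖ ^ ((∑ m ∈ (s : Finset ℕ), d m) - N) * ‖∏ m ∈ (s : Finset ℕ), ((1 - q ^ d m) ^ 2)⁻¹‖
        ≤ (2⁻¹ : ℝ) ^ ((∑ m ∈ (s : Finset ℕ), d m) - N) * (4 : ℝ) ^ k := by
          apply mul_le_mul
          · exact pow_le_pow_left₀ (norm_nonneg q) hq.le _
          · rw [norm_prod]
            calc ∏ m ∈ (s : Finset ℕ), ‖((1 - q ^ d m) ^ 2)⁻¹‖
                ≤ ∏ m ∈ (s : Finset ℕ), (4 : ℝ) :=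
                  Finset.prod_le_prod (fun m _ => norm_nonneg _) hb
              _ = (4 : ℝ) ^ k := by rw [Finset.prod_const, s.2.1]
          · positivity
          · positivity
      _ = (4 : ℝ) ^ k * (2⁻¹ : ℝ) ^ ((∑ m ∈ (s : Finset ℕ), d m) - N) := by ring
  · apply Filter.Eventually.of_forall
    intro t
    apply DifferentiableOn.fun_sum
    intro s _
    apply DifferentiableOn.mul
    · exact (differentiable_pow _).differentiableOn
    · apply DifferentiableOn.fun_finsetProd
      intro m hm
      apply DifferentiableOn.inv
      · exact (((differentiableOn_const _).sub (differentiable_pow _).differentiableOn).pow 2)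
      · intro q hq
        rw [mem_ball, dist_zero_right] at hq
        exact pow_ne_zero 2 (mac_denom_bound hq (hd1 m (hmem s m hm))).1
  · exact isOpen_ball

lemma macG_zero (d : ℕ → ℕ) (hdm : ∀ m, m ≤ d m) (k N : ℕ)
    (hN : N = ∑ i ∈ Finset.Icc 1 k, d i)
    (hstrict : ∀ s : {s : Finset ℕ // s.card = k ∧ 0 ∉ s},
      (s : Finset ℕ) ≠ Finset.Icc 1 k → N < ∑ m ∈ (s : Finset ℕ), d m) :
    macG d k N 0 = 1 := by
  have hmem : (Finset.Icc 1 k).card = k ∧ 0 ∉ Finset.Icc 1 k := by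
    constructor
    · rw [Nat.card_Icc]; omega
    · simp
  rw [macG, tsum_eq_single (⟨Finset.Icc 1 k, hmem⟩ :
      {s : Finset ℕ // s.card = k ∧ 0 ∉ s})]
  · have he : (∑ m ∈ Finset.Icc 1 k, d m) - N = 0 := by omega
    simp only [he, pow_zero, one_mul]
    apply Finset.prod_eq_one
    intro m hm
    have hm1 : 1 ≤ m := (Finset.mem_Icc.mp hm).1
    have : d m ≠ 0 := by have := hdm m; omega
    rw [zero_pow this, sub_zero, one_pow, inv_one]
  · intro s hs
    have hne : (s : Finset ℕ) ≠ Finset.Icc 1 k := fun h => hs (Subtype.ext h)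
    have : (∑ m ∈ (s : Finset ℕ), d m) - N ≠ 0 := by
      have := hstrict s hne; omega
    rw [zero_pow this, zero_mul]

lemma mac_repr (d : ℕ → ℕ) (k N : ℕ)
    (hNle : ∀ s : {s : Finset ℕ // s.card = k ∧ 0 ∉ s},
      N ≤ ∑ m ∈ (s : Finset ℕ), d m) (q : ℂ) :
    (∑' s : {s : Finset ℕ // s.card = k ∧ 0 ∉ s},
      ∏ m ∈ (s : Finset ℕ), q ^ d m / (1 - q ^ d m) ^ 2) = q ^ N * macG d k N q := by
  rw [macG, ← tsum_mul_left]
  apply tsum_congr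
  intro s
  calc ∏ m ∈ (s : Finset ℕ), q ^ d m / (1 - q ^ d m) ^ 2
      = ∏ m ∈ (s : Finset ℕ), q ^ d m * ((1 - q ^ d m) ^ 2)⁻¹ := by
        apply Finset.prod_congr rfl
        intro m _
        rw [div_eq_mul_inv]
    _ = (∏ m ∈ (s : Finset ℕ), q ^ d m) * ∏ m ∈ (s : Finset ℕ), ((1 - q ^ d m) ^ 2)⁻¹ :=
        Finset.prod_mul_distrib
    _ = q ^ (∑ m ∈ (s : Finset ℕ), d m) * ∏ m ∈ (s : Finset ℕ), ((1 - q ^ d m) ^ 2)⁻¹ := by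
        rw [Finset.prod_pow_eq_pow_sum]
    _ = q ^ N * (q ^ ((∑ m ∈ (s : Finset ℕ), d m) - N) *
          ∏ m ∈ (s : Finset ℕ), ((1 - q ^ d m) ^ 2)⁻¹) := by
        rw [← mul_assoc, ← pow_add]
        congr 2
        have := hNle s
        omega

lemma mac_iter_analytic {R : ℝ} {h : ℂ → ℂ} (hh : AnalyticOnNhd ℂ h (ball (0:ℂ) R)) :
    ∀ m : ℕ, AnalyticOnNhd ℂ (iteratedDeriv m h) (ball (0:ℂ) R) := by
  intro m
  induction m with
  | zero => simpa [iteratedDeriv_zero] using hh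
  | succ m ih =>
    rw [iteratedDeriv_succ]
    exact ih.deriv

lemma mac_iterA {R : ℝ} (h : ℂ → ℂ) (hh : AnalyticOnNhd ℂ h (ball (0:ℂ) R)) (n : ℕ) :
    ∀ z ∈ ball (0:ℂ) R, iteratedDeriv (n+1) (fun w => w * h w) z
      = (n+1 : ℂ) * iteratedDeriv n h z + z * iteratedDeriv (n+1) h z := by
  induction n with
  | zero =>
    intro z hz
    have hz' : DifferentiableAt ℂ h z := (hh z hz).differentiableAt
    rw [iteratedDeriv_one, deriv_fun_mul differentiableAt_fun_id hz']
    simp [iteratedDeriv_zero, iteratedDeriv_one]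
  | succ n ih =>
    intro z hz
    have heq : iteratedDeriv (n+2) (fun w => w * h w) z
        = deriv (fun w => (n+1 : ℂ) * iteratedDeriv n h w + w * iteratedDeriv (n+1) h w) z := by
      rw [iteratedDeriv_succ]
      apply Filter.EventuallyEq.deriv_eq
      filter_upwards [isOpen_ball.mem_nhds hz] with w hw
      exact ih w hw
    have d1 : DifferentiableAt ℂ (iteratedDeriv n h) z :=
      ((mac_iter_analytic hh n) z hz).differentiableAt
    have d2 : DifferentiableAt ℂ (iteratedDeriv (n+1) h) z :=
      ((mac_iter_analytic hh (n+1)) z hz).differentiableAt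
    rw [heq, deriv_fun_add (d1.const_mul _) (differentiableAt_fun_id.fun_mul d2),
      deriv_const_mul _ d1, deriv_fun_mul differentiableAt_fun_id d2]
    simp only [← iteratedDeriv_succ]
    simp only [deriv_id'']
    push_cast
    ring

lemma mac_iterB {R : ℝ} (hR : 0 < R) (N : ℕ) (h : ℂ → ℂ)
    (hh : AnalyticOnNhd ℂ h (ball (0:ℂ) R)) :
    (∀ n < N, iteratedDeriv n (fun q : ℂ => q ^ N * h q) 0 = 0) ∧
    iteratedDeriv N (fun q : ℂ => q ^ N * h q) 0 = (N.factorial : ℂ) * h 0 := by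
  induction N with
  | zero =>
    refine ⟨fun n hn => by omega, ?_⟩
    simp [iteratedDeriv_zero]
  | succ N ih =>
    set g := fun q : ℂ => q ^ N * h q with hg_def
    have hg : AnalyticOnNhd ℂ g (ball (0:ℂ) R) := by
      rw [Complex.analyticOnNhd_iff_differentiableOn isOpen_ball]
      exact ((differentiable_pow N).differentiableOn).mul
        hh.differentiableOn
    have hfg : (fun q : ℂ => q ^ (N+1) * h q) = fun w => w * g w := by
      funext w
      simp only [hg_def]
      ring
    obtain ⟨ih1, ih2⟩ := ih
    have h0mem : (0:ℂ) ∈ ball (0:ℂ) R := mem_ball_self hR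
    constructor
    · intro n hn
      rw [hfg]
      match n, hn with
      | 0, _ => simp [iteratedDeriv_zero]
      | (m+1), hn =>
        rw [mac_iterA g hg m 0 h0mem, ih1 m (by omega)]
        simp
    · rw [hfg, mac_iterA g hg N 0 h0mem, ih2]
      rw [Nat.factorial_succ]
      push_cast
      ring

lemma mac_gaussA (k : ℕ) : ∑ i ∈ Finset.Icc 1 k, i = k * (k + 1) / 2 := by
  have h2 : 2 * ∑ i ∈ Finset.Icc 1 k, i = k * (k + 1) := by
    induction k with
    | zero => simp
    | succ k ih =>
      have hicc : Finset.Icc 1 (k + 1) = insert (k + 1) (Finset.Icc 1 k) := by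
        ext x; simp only [Finset.mem_Icc, Finset.mem_insert]; omega
      rw [hicc, Finset.sum_insert (by simp), mul_add, ih]
      ring
  omega

lemma mac_gaussC (k : ℕ) : ∑ i ∈ Finset.Icc 1 k, (2 * i - 1) = k ^ 2 := by
  induction k with
  | zero => simp
  | succ k ih =>
    have hicc : Finset.Icc 1 (k + 1) = insert (k + 1) (Finset.Icc 1 k) := by
      ext x; simp only [Finset.mem_Icc, Finset.mem_insert]; omega
    rw [hicc, Finset.sum_insert (by simp), ih]
    have h1 : 2 * (k + 1) - 1 = 2 * k + 1 := by omega
    rw [h1, pow_two, pow_two]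
    ring

theorem mac_general (d : ℕ → ℕ) (hd : StrictMono d) (hdm : ∀ m, m ≤ d m)
    (k N : ℕ) (hN : N = ∑ i ∈ Finset.Icc 1 k, d i) :
    (∀ n < N, iteratedDeriv n (fun q : ℂ =>
      ∑' s : {s : Finset ℕ // s.card = k ∧ 0 ∉ s},
        ∏ m ∈ (s : Finset ℕ), q ^ d m / (1 - q ^ d m) ^ 2) 0 = 0) ∧
    iteratedDeriv N (fun q : ℂ =>
      ∑' s : {s : Finset ℕ // s.card = k ∧ 0 ∉ s},
        ∏ m ∈ (s : Finset ℕ), q ^ d m / (1 - q ^ d m) ^ 2) 0 = (N.factorial : ℂ) := by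
  have hmin := fun s : {s : Finset ℕ // s.card = k ∧ 0 ∉ s} =>
    mac_sum_d_min d hd k s.1 s.2.1 s.2.2
  have hNle : ∀ s : {s : Finset ℕ // s.card = k ∧ 0 ∉ s},
      N ≤ ∑ m ∈ (s : Finset ℕ), d m := fun s => hN ▸ (hmin s).1
  have hstrict : ∀ s : {s : Finset ℕ // s.card = k ∧ 0 ∉ s},
      (s : Finset ℕ) ≠ Finset.Icc 1 k → N < ∑ m ∈ (s : Finset ℕ), d m :=
    fun s hs => hN ▸ (hmin s).2 hs
  have hrepr : (fun q : ℂ =>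
      ∑' s : {s : Finset ℕ // s.card = k ∧ 0 ∉ s},
        ∏ m ∈ (s : Finset ℕ), q ^ d m / (1 - q ^ d m) ^ 2)
      = fun q : ℂ => q ^ N * macG d k N q := funext (mac_repr d k N hNle)
  have hG : AnalyticOnNhd ℂ (macG d k N) (ball (0:ℂ) 2⁻¹) :=
    (Complex.analyticOnNhd_iff_differentiableOn isOpen_ball).mpr
      (macG_differentiableOn d hdm k N hNle)
  obtain ⟨h1, h2⟩ := mac_iterB (by norm_num : (0:ℝ) < 2⁻¹) N (macG d k N) hG
  rw [hrepr]
  exact ⟨h1, by rw [h2, macG_zero d hdm k N hN hstrict, mul_one]⟩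



/-- MacMahon's generalized sum-of-divisors function `A_k(q)`. -/
noncomputable def macA (k : ℕ) (q : ℂ) : ℂ :=
  ∑' s : {s : Finset ℕ // s.card = k ∧ 0 ∉ s},
    ∏ m ∈ (s : Finset ℕ), q ^ m / (1 - q ^ m) ^ 2

/-- MacMahon's generalized sum-of-divisors function `C_k(q)`
(note `q^{2m₁+⋯+2m_k-k} = ∏ᵢ q^{2mᵢ-1}`). -/
noncomputable def macC (k : ℕ) (q : ℂ) : ℂ :=
  ∑' s : {s : Finset ℕ // s.card = k ∧ 0 ∉ s},
    ∏ m ∈ (s : Finset ℕ), q ^ (2 * m - 1) / (1 - q ^ (2 * m - 1)) ^ 2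

/-- For `k ≥ 1`: the Taylor coefficients of `A_k` at `0` (i.e.
`iteratedDeriv n (A_k) 0 / n!`) vanish in all degrees `< k(k+1)/2` and equal `1` in
degree `k(k+1)/2`; likewise the Taylor coefficients of `C_k` vanish in degrees `< k²`
and equal `1` in degree `k²`. -/
theorem stmt16 (k : ℕ) (hk : 1 ≤ k) :
    (∀ n : ℕ, n < k * (k + 1) / 2 → iteratedDeriv n (macA k) 0 = 0) ∧
    iteratedDeriv (k * (k + 1) / 2) (macA k) 0 / (k * (k + 1) / 2).factorial = 1 ∧
    (∀ n : ℕ, n < k ^ 2 → iteratedDeriv n (macC k) 0 = 0) ∧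
    iteratedDeriv (k ^ 2) (macC k) 0 / (k ^ 2).factorial = 1 := by
  have hdA : StrictMono (fun m : ℕ => m) := fun a b h => h
  have hNA : k * (k + 1) / 2 = ∑ i ∈ Finset.Icc 1 k, (fun m : ℕ => m) i := by
    simpa using (mac_gaussA k).symm
  obtain ⟨hA1, hA2⟩ := mac_general (fun m : ℕ => m) hdA (fun m => le_refl m) k
    (k * (k + 1) / 2) hNA
  have hdC : StrictMono (fun m : ℕ => 2 * m - 1) := fun a b h => by
    show 2 * a - 1 < 2 * b - 1
    omega
  have hNC : k ^ 2 = ∑ i ∈ Finset.Icc 1 k, (fun m : ℕ => 2 * m - 1) i := by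
    simpa using (mac_gaussC k).symm
  obtain ⟨hC1, hC2⟩ := mac_general (fun m : ℕ => 2 * m - 1) hdC
    (fun m => by show m ≤ 2 * m - 1; omega) k (k ^ 2) hNC
  refine ⟨fun n hn => hA1 n hn, ?_, fun n hn => hC1 n hn, ?_⟩
  · have h : iteratedDeriv (k * (k + 1) / 2) (macA k) 0
        = ((k * (k + 1) / 2).factorial : ℂ) := hA2
    rw [h]
    exact div_self (Nat.cast_ne_zero.mpr (Nat.factorial_ne_zero _))
  · have h : iteratedDeriv (k ^ 2) (macC k) 0 = ((k ^ 2).factorial : ℂ) := hC2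
    rw [h]
    exact div_self (Nat.cast_ne_zero.mpr (Nat.factorial_ne_zero _))
end
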